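/- arXiv:math/9607213 — 2 statements merged into one kernel-verified Lean document; each statement's English description precedes it below -/
import Mathlib

section
/- Let g ∈ Mat_{n×n}(ℂ) be invertible with gᵀ = g and conj(g) = g (i.e. g is real symmetric, viewed as a complex matrix), and let b ∈ Mat_{n×n}(ℂ) be such that g·b is symmetric ((g·b)ᵀ = g·b). Then the 2n×2n block matrix G = [[g + ½·bᵀ·g·conj(b), bᵀ], [conj(b), 2·g⁻¹]] is invertible with inverse G⁻¹ = [[g⁻¹, −½·b], [−½·conj(b)ᵀ, ½·(g + ½·conj(b)ᵀ·g·b)]]; that is, the product of these two block matrices in either order is the 2n×2n identity matrix. -/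
open Matrix

/-- If `g ∈ Mat_{n×n}(ℂ)` is invertible, real symmetric (`gᵀ = g`,
`conj(g) = g`), and `b` is such that `g·b` is symmetric, then the block matrix
`G = [[g + ½bᵀg·conj(b), bᵀ], [conj(b), 2g⁻¹]]` is invertible with inverse
`[[g⁻¹, −½b], [−½conj(b)ᵀ, ½(g + ½conj(b)ᵀg·b)]]`: the product in either order is the
identity. -/
theorem stmt_12 (n : ℕ) (g b : Matrix (Fin n) (Fin n) ℂ)
    (hgsym : gᵀ = g) (hgreal : g.map (starRingEnd ℂ) = g) (hgu : IsUnit g)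
    (hgb : (g * b)ᵀ = g * b) :
    Matrix.fromBlocks (g + (1 / 2 : ℂ) • (bᵀ * g * b.map (starRingEnd ℂ))) bᵀ
        (b.map (starRingEnd ℂ)) ((2 : ℂ) • g⁻¹)
      * Matrix.fromBlocks g⁻¹ (-((1 / 2 : ℂ) • b)) (-((1 / 2 : ℂ) • (b.map (starRingEnd ℂ))ᵀ))
        ((1 / 2 : ℂ) • (g + (1 / 2 : ℂ) • ((b.map (starRingEnd ℂ))ᵀ * g * b))) = 1 ∧
    Matrix.fromBlocks g⁻¹ (-((1 / 2 : ℂ) • b)) (-((1 / 2 : ℂ) • (b.map (starRingEnd ℂ))ᵀ))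
        ((1 / 2 : ℂ) • (g + (1 / 2 : ℂ) • ((b.map (starRingEnd ℂ))ᵀ * g * b)))
      * Matrix.fromBlocks (g + (1 / 2 : ℂ) • (bᵀ * g * b.map (starRingEnd ℂ))) bᵀ
        (b.map (starRingEnd ℂ)) ((2 : ℂ) • g⁻¹) = 1 := by
  set c := b.map (starRingEnd ℂ) with hc
  have hdet : IsUnit g.det := (Matrix.isUnit_iff_isUnit_det g).mp hgu
  have h1 : g * g⁻¹ = 1 := Matrix.mul_nonsing_inv g hdet
  have h2 : g⁻¹ * g = 1 := Matrix.nonsing_inv_mul g hdet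
  have hbg : bᵀ * g = g * b := by
    calc bᵀ * g = bᵀ * gᵀ := by rw [hgsym]
    _ = (g * b)ᵀ := (Matrix.transpose_mul g b).symm
    _ = g * b := hgb
  have hm : (g * b).map (starRingEnd ℂ) = g * c := by
    rw [Matrix.map_mul, hgreal]
  have hgc : (g * c)ᵀ = g * c := by
    rw [← hm, ← Matrix.transpose_map, hgb, hm]
  have hcg : cᵀ * g = g * c := by
    calc cᵀ * g = cᵀ * gᵀ := by rw [hgsym]
    _ = (g * c)ᵀ := (Matrix.transpose_mul g c).symm
    _ = g * c := hgc
  have hbinv : g⁻¹ * bᵀ = b * g⁻¹ := by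
    have h : g⁻¹ * (bᵀ * g) * g⁻¹ = g⁻¹ * (g * b) * g⁻¹ := by rw [hbg]
    rwa [mul_assoc, mul_assoc, h1, mul_one, ← mul_assoc, h2, one_mul] at h
  have hcinv : g⁻¹ * cᵀ = c * g⁻¹ := by
    have h : g⁻¹ * (cᵀ * g) * g⁻¹ = g⁻¹ * (g * c) * g⁻¹ := by rw [hcg]
    rwa [mul_assoc, mul_assoc, h1, mul_one, ← mul_assoc, h2, one_mul] at h
  -- first product blocks
  have e11 : (g + (1/2 : ℂ) • (bᵀ * g * c)) * g⁻¹ + bᵀ * -((1/2 : ℂ) • cᵀ) = 1 := by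
    have k : g * (c * g⁻¹) = cᵀ := by rw [← hcinv, ← mul_assoc, h1, one_mul]
    simp only [mul_add, add_mul, Matrix.mul_smul, Matrix.smul_mul, mul_neg, neg_mul,
      smul_smul, smul_add, neg_smul, smul_neg, neg_add_rev, mul_assoc]
    rw [k, h1]
    module
  have e12 : (g + (1/2 : ℂ) • (bᵀ * g * c)) * -((1/2 : ℂ) • b)
      + bᵀ * ((1/2 : ℂ) • (g + (1/2 : ℂ) • (cᵀ * g * b))) = 0 := by
    have k : g * (c * b) = cᵀ * (g * b) := by rw [← mul_assoc, ← hcg, mul_assoc]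
    simp only [mul_add, add_mul, Matrix.mul_smul, Matrix.smul_mul, mul_neg, neg_mul,
      smul_smul, smul_add, neg_smul, smul_neg, neg_add_rev, mul_assoc]
    rw [k, hbg]
    module
  have e21 : c * g⁻¹ + ((2 : ℂ) • g⁻¹) * -((1/2 : ℂ) • cᵀ) = 0 := by
    simp only [mul_add, add_mul, Matrix.mul_smul, Matrix.smul_mul, mul_neg, neg_mul,
      smul_smul, smul_add, neg_smul, smul_neg, neg_add_rev, mul_assoc]
    rw [hcinv]
    module
  have e22 : c * -((1/2 : ℂ) • b)
      + ((2 : ℂ) • g⁻¹) * ((1/2 : ℂ) • (g + (1/2 : ℂ) • (cᵀ * g * b))) = 1 := by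
    have k : g⁻¹ * (cᵀ * (g * b)) = c * b := by
      rw [← mul_assoc, hcinv, mul_assoc, ← mul_assoc g⁻¹ g b, h2, one_mul]
    simp only [mul_add, add_mul, Matrix.mul_smul, Matrix.smul_mul, mul_neg, neg_mul,
      smul_smul, smul_add, neg_smul, smul_neg, neg_add_rev, mul_assoc]
    rw [k, h2]
    module
  -- second product blocks
  have f11 : g⁻¹ * (g + (1/2 : ℂ) • (bᵀ * g * c)) + -((1/2 : ℂ) • b) * c = 1 := by
    have k : g⁻¹ * (bᵀ * (g * c)) = b * c := by
      rw [← mul_assoc, hbinv, mul_assoc, ← mul_assoc g⁻¹ g c, h2, one_mul]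
    simp only [mul_add, add_mul, Matrix.mul_smul, Matrix.smul_mul, mul_neg, neg_mul,
      smul_smul, smul_add, neg_smul, smul_neg, neg_add_rev, mul_assoc]
    rw [k, h2]
    module
  have f12 : g⁻¹ * bᵀ + -((1/2 : ℂ) • b) * ((2 : ℂ) • g⁻¹) = 0 := by
    simp only [mul_add, add_mul, Matrix.mul_smul, Matrix.smul_mul, mul_neg, neg_mul,
      smul_smul, smul_add, neg_smul, smul_neg, neg_add_rev, mul_assoc]
    rw [hbinv]
    module
  have f21 : -((1/2 : ℂ) • cᵀ) * (g + (1/2 : ℂ) • (bᵀ * g * c))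
      + ((1/2 : ℂ) • (g + (1/2 : ℂ) • (cᵀ * g * b))) * c = 0 := by
    have k : bᵀ * (g * c) = g * (b * c) := by rw [← mul_assoc, hbg, mul_assoc]
    simp only [mul_add, add_mul, Matrix.mul_smul, Matrix.smul_mul, mul_neg, neg_mul,
      smul_smul, smul_add, neg_smul, smul_neg, neg_add_rev, mul_assoc]
    rw [k, hcg]
    module
  have f22 : -((1/2 : ℂ) • cᵀ) * bᵀ
      + ((1/2 : ℂ) • (g + (1/2 : ℂ) • (cᵀ * g * b))) * ((2 : ℂ) • g⁻¹) = 1 := by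
    have k : g * (b * g⁻¹) = bᵀ := by
      rw [← mul_assoc, ← hbg, mul_assoc, h1, mul_one]
    simp only [mul_add, add_mul, Matrix.mul_smul, Matrix.smul_mul, mul_neg, neg_mul,
      smul_smul, smul_add, neg_smul, smul_neg, neg_add_rev, mul_assoc]
    rw [k, h1]
    module
  constructor
  · rw [Matrix.fromBlocks_multiply, e11, e12, e21, e22, Matrix.fromBlocks_one]
  · rw [Matrix.fromBlocks_multiply, f11, f12, f21, f22, Matrix.fromBlocks_one]
end

section
/- Let (V, ω) be a complex symplectic vector space of complex dimension 2n with a compatible real structure τ. If L₁ is a Lagrangean subspace of (V, ω) with L₁ ∩ τL₁ = 0, then there exists a Lagrangean subspace L of (V, ω) with τL = L and L ∩ L₁ = 0. -/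
/-- With `(V, ω, τ)` as usual, if `L₁` is a Lagrangean subspace of `(V, ω)`
with `L₁ ∩ τL₁ = 0`, then there exists a Lagrangean subspace `L` with `τL = L` and
`L ∩ L₁ = 0`. -/
theorem stmt_15 (n : ℕ) (hn : 1 ≤ n)
    (V : Type*) [AddCommGroup V] [Module ℂ V] [FiniteDimensional ℂ V]
    (hdim : Module.finrank ℂ V = 2 * n)
    (ω : V →ₗ[ℂ] V →ₗ[ℂ] ℂ)
    (hAlt : ∀ v : V, ω v v = 0)
    (hNondeg : ∀ u : V, (∀ v : V, ω u v = 0) → u = 0)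
    (τ : V → V)
    (hτAdd : ∀ u v : V, τ (u + v) = τ u + τ v)
    (hτSmul : ∀ (c : ℂ) (v : V), τ (c • v) = (starRingEnd ℂ) c • τ v)
    (hτInv : ∀ v : V, τ (τ v) = v)
    (hτω : ∀ u v : V, ω (τ u) (τ v) = (starRingEnd ℂ) (ω u v))
    (L₁ : Submodule ℂ V)
    (hL₁dim : Module.finrank ℂ L₁ = n)
    (hL₁Lag : ∀ x ∈ L₁, ∀ y ∈ L₁, ω x y = 0)
    (hL₁τ : ∀ x ∈ L₁, τ x ∈ L₁ → x = 0) :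
    ∃ L : Submodule ℂ V,
      Module.finrank ℂ L = n ∧
      (∀ x ∈ L, ∀ y ∈ L, ω x y = 0) ∧
      (∀ x : V, x ∈ L ↔ τ x ∈ L) ∧
      L ⊓ L₁ = ⊥ := by
  classical
  -- basic facts about τ and ω
  have hτ0 : τ 0 = 0 := by
    have h := hτAdd 0 0
    simpa using h.symm
  have hτsum : ∀ (f : Fin n → V), τ (∑ i, f i) = ∑ i, τ (f i) := by
    intro f
    induction (Finset.univ : Finset (Fin n)) using Finset.induction with
    | empty => simpa using hτ0
    | @insert a s h ih =>
        rw [Finset.sum_insert h, Finset.sum_insert h, hτAdd, ih]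
  have hskew : ∀ x y : V, ω x y = - ω y x := by
    intro x y
    have h := hAlt (x + y)
    simp only [map_add, LinearMap.add_apply, hAlt x, hAlt y] at h
    linear_combination h
  have hτω' : ∀ x y : V, ω (τ x) y = (starRingEnd ℂ) (ω x (τ y)) := by
    intro x y
    have := hτω x (τ y)
    rwa [hτInv y] at this
  -- basis of L₁ and Gram matrix of the (skew-hermitian) form (x,y) ↦ ω x (τ y)
  haveI : FiniteDimensional ℂ L₁ := inferInstance
  let b : Module.Basis (Fin n) ℂ L₁ := Module.finBasisOfFinrankEq ℂ L₁ hL₁dim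
  let bv : Fin n → V := fun j => (b j : V)
  have hbv_mem : ∀ j, bv j ∈ L₁ := fun j => (b j).2
  let G : Matrix (Fin n) (Fin n) ℂ := Matrix.of fun j k => ω (bv j) (τ (bv k))
  let A : Matrix (Fin n) (Fin n) ℂ := Complex.I • G
  have hGconj : ∀ j k, (starRingEnd ℂ) (G k j) = - G j k := by
    intro j k
    show (starRingEnd ℂ) (ω (bv k) (τ (bv j))) = - ω (bv j) (τ (bv k))
    rw [← hτω, hτInv, hskew]
  have hA : A.IsHermitian := by
    apply Matrix.ext
    intro j k
    show (starRingEnd ℂ) (A k j) = A j k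
    show (starRingEnd ℂ) (Complex.I * G k j) = Complex.I * G j k
    rw [map_mul, Complex.conj_I, hGconj]
    ring
  -- diagonalize
  let U : Matrix (Fin n) (Fin n) ℂ := (Matrix.IsHermitian.eigenvectorUnitary hA : Matrix (Fin n) (Fin n) ℂ)
  let D : Matrix (Fin n) (Fin n) ℂ := Matrix.diagonal ((↑) ∘ hA.eigenvalues)
  have hdiag : star U * A * U = D := by
    have h := hA.conjStarAlgAut_star_eigenvectorUnitary
    rw [Unitary.conjStarAlgAut_star_apply] at h
    exact h
  have hDreal : ∀ p q, (starRingEnd ℂ) (D p q) = D p q := by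
    intro p q
    by_cases h : p = q
    · subst h; simp [D, Matrix.diagonal_apply_eq, Complex.conj_ofReal]
    · simp [D, Matrix.diagonal_apply_ne _ h]
  have hGU : star U * G * U = (-Complex.I) • D := by
    have h1 : star U * A * U = Complex.I • (star U * G * U) := by
      show star U * (Complex.I • G) * U = _
      rw [Matrix.mul_smul, Matrix.smul_mul]
    have h2 : Complex.I • (star U * G * U) = D := by rw [← h1, hdiag]
    calc star U * G * U = (-Complex.I) • (Complex.I • (star U * G * U)) := by
          rw [smul_smul]; simp
      _ = (-Complex.I) • D := by rw [h2]
  -- the unitary is invertible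
  have hUdet : IsUnit U.det := by
    have h1 : U * star U = 1 := (Matrix.mem_unitaryGroup_iff).mp (Matrix.IsHermitian.eigenvectorUnitary hA).2
    have := congrArg Matrix.det h1
    rw [Matrix.det_mul, Matrix.det_one] at this
    exact IsUnit.of_mul_eq_one _ this
  let M : Matrix (Fin n) (Fin n) ℂ := U.map (starRingEnd ℂ)
  have hMdet : IsUnit M.det := by
    have : (starRingEnd ℂ) U.det = M.det := RingHom.map_det (starRingEnd ℂ) U
    rw [← this]
    exact hUdet.map (starRingEnd ℂ)
  -- new basis of L₁ diagonalizing the form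
  let φ : L₁ →ₗ[ℂ] L₁ := Matrix.toLin b b M
  have hφdet : IsUnit (LinearMap.toMatrix b b φ).det := by
    rwa [LinearMap.toMatrix_toLin]
  let e : Module.Basis (Fin n) ℂ L₁ := b.map (LinearEquiv.ofIsUnitDet hφdet)
  have he : ∀ q, e q = φ (b q) := by
    intro q
    show (LinearEquiv.ofIsUnitDet hφdet) (b q) = φ (b q)
    exact DFunLike.congr_fun (LinearEquiv.coe_ofIsUnitDet hφdet) (b q)
  let w : Fin n → V := fun q => (e q : V)
  have hw_mem : ∀ q, w q ∈ L₁ := fun q => (e q).2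
  have hw_eq : ∀ q, w q = ∑ j, M j q • bv j := by
    intro q
    show ((e q : L₁) : V) = _
    rw [he, Matrix.toLin_self]
    push_cast
    rfl
  have hw_li : LinearIndependent ℂ w :=
    e.linearIndependent.map' L₁.subtype (Submodule.ker_subtype L₁)
  -- key computation: ω (w p) (τ (w q)) is the (p,q) entry of star U * G * U
  have hτw : ∀ q, τ (w q) = ∑ j, U j q • τ (bv j) := by
    intro q
    rw [hw_eq, hτsum]
    refine Finset.sum_congr rfl fun j _ => ?_
    rw [hτSmul]
    congr 1
    simp [M]
  have hkey : ∀ p q, ω (w p) (τ (w q)) = -Complex.I * D p q := by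
    intro p q
    have h1 : ω (w p) (τ (w q)) = ∑ k, ∑ j, (starRingEnd ℂ) (U j p) * G j k * U k q := by
      rw [hw_eq p, hτw q, map_sum]
      refine Finset.sum_congr rfl fun k _ => ?_
      rw [map_smul, smul_eq_mul]
      rw [map_sum, LinearMap.sum_apply, Finset.mul_sum]
      refine Finset.sum_congr rfl fun j _ => ?_
      rw [map_smul, LinearMap.smul_apply, smul_eq_mul]
      simp only [M, Matrix.map_apply, G, Matrix.of_apply]
      ring
    have h2 : (star U * G * U) p q = ∑ k, ∑ j, (starRingEnd ℂ) (U j p) * G j k * U k q := by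
      rw [Matrix.mul_apply]
      refine Finset.sum_congr rfl fun k _ => ?_
      rw [Matrix.mul_apply, Finset.sum_mul]
      refine Finset.sum_congr rfl fun j _ => ?_
      rw [Matrix.star_apply, ← starRingEnd_apply]
    have h3 : (star U * G * U) p q = -Complex.I * D p q := by
      rw [hGU, Matrix.smul_apply, smul_eq_mul]
    rw [h1, ← h2, h3]
  -- the Lagrangean: span of w q + τ (w q)
  set v : Fin n → V := fun q => w q + τ (w q) with hv_def
  have hτv : ∀ q, τ (v q) = v q := by
    intro q
    show τ (w q + τ (w q)) = w q + τ (w q)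
    rw [hτAdd, hτInv]
    exact add_comm _ _
  have hωv : ∀ p q, ω (v p) (v q) = 0 := by
    intro p q
    have hww : ω (w p) (w q) = 0 := hL₁Lag _ (hw_mem p) _ (hw_mem q)
    have h1 : ω (τ (w p)) (w q) = (starRingEnd ℂ) (ω (w p) (τ (w q))) := hτω' _ _
    have h2 : ω (τ (w p)) (τ (w q)) = (starRingEnd ℂ) (ω (w p) (w q)) := hτω _ _
    show ω (w p + τ (w p)) (w q + τ (w q)) = 0
    simp only [map_add, LinearMap.add_apply]
    rw [hww, h1, h2, hww, hkey]
    rw [map_mul, map_neg, Complex.conj_I, hDreal p q, map_zero]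
    ring
  -- decomposition of combinations of the v's
  have hsplit : ∀ a : Fin n → ℂ,
      (∑ q, a q • v q) = (∑ q, a q • w q) + (∑ q, a q • τ (w q)) := by
    intro a
    rw [← Finset.sum_add_distrib]
    refine Finset.sum_congr rfl fun q _ => ?_
    rw [hv_def]
    exact smul_add _ _ _
  have hτcomb : ∀ a : Fin n → ℂ,
      τ (∑ q, (starRingEnd ℂ) (a q) • w q) = ∑ q, a q • τ (w q) := by
    intro a
    rw [hτsum]
    refine Finset.sum_congr rfl fun q _ => ?_
    rw [hτSmul]
    simp
  have hwcomb_mem : ∀ a : Fin n → ℂ, (∑ q, a q • w q) ∈ L₁ := fun a =>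
    Submodule.sum_mem _ fun q _ => Submodule.smul_mem _ _ (hw_mem q)
  -- key cancellation lemma
  have hcancel : ∀ a : Fin n → ℂ, (∑ q, a q • τ (w q)) ∈ L₁ → a = 0 := by
    intro a hmem
    have ht0 : (∑ q, (starRingEnd ℂ) (a q) • w q) = 0 := by
      refine hL₁τ _ (hwcomb_mem _) ?_
      rw [hτcomb]
      exact hmem
    have hz := Fintype.linearIndependent_iff.mp hw_li (fun q => (starRingEnd ℂ) (a q)) ht0
    funext q
    have := hz q
    simpa using this
  have hv_li : LinearIndependent ℂ v := by
    rw [Fintype.linearIndependent_iff]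
    intro a ha
    have hs : (∑ q, a q • w q) + (∑ q, a q • τ (w q)) = 0 := by
      rw [← hsplit]; exact ha
    have hmem : (∑ q, a q • τ (w q)) ∈ L₁ := by
      have : (∑ q, a q • τ (w q)) = -(∑ q, a q • w q) := eq_neg_of_add_eq_zero_right hs
      rw [this]
      exact Submodule.neg_mem _ (hwcomb_mem a)
    have := hcancel a hmem
    intro q; rw [this]; rfl
  refine ⟨Submodule.span ℂ (Set.range v), ?_, ?_, ?_, ?_⟩
  · rw [finrank_span_eq_card hv_li, Fintype.card_fin]
  · intro x hx y hy
    obtain ⟨c, rfl⟩ := (Submodule.mem_span_range_iff_exists_fun ℂ).mp hx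
    obtain ⟨d, rfl⟩ := (Submodule.mem_span_range_iff_exists_fun ℂ).mp hy
    simp only [map_sum, map_smul, LinearMap.sum_apply, LinearMap.smul_apply, smul_eq_mul]
    simp [hωv]
  · have fwd : ∀ x ∈ Submodule.span ℂ (Set.range v), τ x ∈ Submodule.span ℂ (Set.range v) := by
      intro x hx
      obtain ⟨c, rfl⟩ := (Submodule.mem_span_range_iff_exists_fun ℂ).mp hx
      rw [hτsum]
      refine Submodule.sum_mem _ fun q _ => ?_
      rw [hτSmul, hτv]
      exact Submodule.smul_mem _ _ (Submodule.subset_span ⟨q, rfl⟩)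
    intro x
    constructor
    · exact fwd x
    · intro h
      have := fwd _ h
      rwa [hτInv] at this
  · rw [eq_bot_iff]
    intro z hz
    rw [Submodule.mem_inf] at hz
    obtain ⟨a, ha⟩ := (Submodule.mem_span_range_iff_exists_fun ℂ).mp hz.1
    have hmem : (∑ q, a q • τ (w q)) ∈ L₁ := by
      have hzeq : (∑ q, a q • τ (w q)) = z - (∑ q, a q • w q) := by
        rw [← ha, hsplit]
        abel
      rw [hzeq]
      exact Submodule.sub_mem _ hz.2 (hwcomb_mem a)
    have ha0 := hcancel a hmem
    rw [Submodule.mem_bot, ← ha, ha0]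
    simp
end
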